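/- arXiv:2510.15099 — 6 statements merged into one kernel-verified Lean document; each statement's English description precedes it below -/
import Mathlib

section
/- For every even index i with i ≥ 2, the ABR base satisfies B_i = 2^i. -/
/-- The ABR base sequence: B 0 = 2, B 1 = 3, and for i ≥ 2,
    B i = 2^(i+1) - 1 - ∑_{j odd, j < i} B j. -/
def abrB : ℕ → ℕ
  | 0 => 2
  | 1 => 3
  | n + 2 =>
      2 ^ (n + 3) - 1 -
        ∑ j ∈ ((Finset.range (n + 2)).filter fun j => j % 2 = 1).attach, abrB j.1
  decreasing_by
    exact Finset.mem_range.mp (Finset.mem_filter.mp j.2).1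

/-- Extend a length-`n` bit string to all of ℕ by zeros. -/
def extBits (n : ℕ) (d : Fin n → Bool) : ℕ → Bool :=
  fun i => if h : i < n then d ⟨i, h⟩ else false

/-- The sign exponent ε: 1 iff i is even, i ≤ n - 2, d i = 1 and d (i+1) = 1. -/
def abrEps (n : ℕ) (d : ℕ → Bool) (i : ℕ) : ℕ :=
  if i % 2 = 0 ∧ i + 2 ≤ n ∧ d i = true ∧ d (i + 1) = true then 1 else 0

/-- ABR value of an n-bit string: ∑_{i<n} (-1)^{ε(i)} dᵢ Bᵢ. -/
def abrVal (n : ℕ) (d : ℕ → Bool) : ℤ :=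
  ∑ i ∈ Finset.range n, (-1) ^ abrEps n d i * (cond (d i) 1 0 : ℤ) * (abrB i : ℤ)


def abrS (n : ℕ) : ℕ := ∑ j ∈ (Finset.range n).filter (fun j => j % 2 = 1), abrB j

lemma abrB_add_two (n : ℕ) : abrB (n + 2) = 2 ^ (n + 3) - 1 - abrS (n + 2) := by
  rw [abrB, abrS, Finset.sum_attach]

lemma abrS_succ (n : ℕ) :
    abrS (n + 1) = abrS n + if n % 2 = 1 then abrB n else 0 := by
  simp only [abrS, Finset.sum_filter, Finset.sum_range_succ]

lemma abr_key : ∀ k : ℕ, abrS (2 * k + 1) = 4 ^ k - 1 ∧ abrB (2 * k + 1) = 3 * 4 ^ k := by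
  intro k
  induction k with
  | zero =>
    constructor
    · simp [abrS]
    · norm_num [abrB]
  | succ k ih =>
    obtain ⟨hS, hB⟩ := ih
    have hS2 : abrS (2 * (k + 1) + 1) = 4 ^ (k + 1) - 1 := by
      have e1 : 2 * (k + 1) + 1 = (2 * k + 2) + 1 := by ring
      have e0 : 2 * k + 2 = (2 * k + 1) + 1 := by ring
      rw [e1, abrS_succ, e0, abrS_succ]
      have h1 : (2 * k + 1) % 2 = 1 := by omega
      rw [if_pos h1, if_neg (by omega), hS, hB]
      have : 1 ≤ 4 ^ k := Nat.one_le_pow _ _ (by norm_num)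
      have h4 : (4:ℕ) ^ (k+1) = 4 * 4 ^ k := by ring
      omega
    refine ⟨hS2, ?_⟩
    have e : 2 * (k + 1) + 1 = (2 * k + 1) + 2 := by ring
    rw [e, abrB_add_two]
    have e2 : (2 * k + 1) + 2 = 2 * (k + 1) + 1 := by ring
    rw [e2, hS2]
    have hp : (2 : ℕ) ^ (2 * k + 1 + 3) = 4 * 4 ^ (k + 1) := by
      rw [show 2 * k + 1 + 3 = 2 * (k + 2) from by ring, pow_mul]
      ring_nf
    rw [hp]
    have : 1 ≤ 4 ^ (k + 1) := Nat.one_le_pow _ _ (by norm_num)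
    omega

theorem abr_even_base (i : ℕ) (h2 : 2 ≤ i) (he : i % 2 = 0) :
    abrB i = 2 ^ i := by
  obtain ⟨m, rfl⟩ : ∃ m, i = 2 * m + 2 := ⟨(i - 2) / 2, by omega⟩
  obtain ⟨hS, hB⟩ := abr_key m
  rw [abrB_add_two]
  rw [show 2 * m + 2 = (2 * m + 1) + 1 from by ring, abrS_succ]
  have h1 : (2 * m + 1) % 2 = 1 := by omega
  simp only [h1, if_true, hS, hB]
  have h2p : ∀ t, (2:ℕ) ^ (2 * t) = 4 ^ t := by
    intro t; rw [pow_mul]; norm_num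
  have hp : (2 : ℕ) ^ (2 * m + 3) = 8 * 4 ^ m := by
    rw [show 2 * m + 3 = 2 * m + 3 from rfl, pow_add, h2p]; ring
  have hp2 : (2 : ℕ) ^ (2 * m + 1 + 1) = 4 * 4 ^ m := by
    rw [show 2 * m + 1 + 1 = 2 * m + 2 from rfl, pow_add, h2p]; ring
  rw [hp, hp2]
  have : 1 ≤ 4 ^ m := Nat.one_le_pow _ _ (by norm_num)
  omega
end

section
/- For every even i ≥ 2, the sum of B_j over all odd j < i equals 2^i - 1, and for every odd i ≥ 3, the sum of B_j over all odd j < i equals 2^{i-1} - 1. -/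
theorem abr_odd_partial_sums (i : ℕ) :
    (2 ≤ i → i % 2 = 0 →
      ∑ j ∈ (Finset.range i).filter (fun j => j % 2 = 1), abrB j = 2 ^ i - 1) ∧
    (3 ≤ i → i % 2 = 1 →
      ∑ j ∈ (Finset.range i).filter (fun j => j % 2 = 1), abrB j = 2 ^ (i - 1) - 1) := by
  induction i with
  | zero => exact ⟨by omega, by omega⟩
  | succ n ih =>
    constructor
    · intro h2 hev
      have hodd : n % 2 = 1 := by omega
      rcases Nat.lt_or_ge n 3 with hn | hn
      · have hn1 : n = 1 := by omega
        subst hn1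
        norm_num [Finset.sum_filter, Finset.sum_range_succ, abrB]
      · have hS := ih.2 hn hodd
        rw [Finset.range_add_one, Finset.filter_insert, if_pos hodd,
          Finset.sum_insert (by simp)]
        obtain ⟨m, rfl⟩ : ∃ m, n = m + 2 := ⟨n - 2, by omega⟩
        rw [abrB, Finset.sum_attach _ (fun j => abrB j), hS]
        have h1 : 1 ≤ 2 ^ (m + 1) := Nat.one_le_two_pow
        have h2' : (2:ℕ) ^ (m + 3) = 4 * 2 ^ (m + 1) := by ring
        have h3 : m + 2 - 1 = m + 1 := by omega
        have h4 : (2:ℕ) ^ (m + 2) = 4 * 2 ^ m := by ring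
        have h5 : 1 ≤ 2 ^ m := Nat.one_le_two_pow
        rw [h3] at hS ⊢
        omega
    · intro h3 hoddd
      have hev : n % 2 = 0 := by omega
      have hS := ih.1 (by omega) hev
      rw [Finset.range_add_one, Finset.filter_insert, if_neg (by omega)]
      simpa using hS
end

section
/- For every bit string d of length n ≥ 2, the ABR value v(d) = ∑_{i=0}^{n-1} (-1)^{ε(i)} d_i B_i satisfies 0 ≤ v(d) ≤ 2^n - 1. -/
def B' : ℕ → ℕ := fun i => if i = 0 then 2 else if i % 2 = 0 then 2 ^ i else 3 * 2 ^ (i - 1)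

lemma sumOdd (m : ℕ) :
    ∑ j ∈ (Finset.range m).filter (fun j => j % 2 = 1), B' j = 4 ^ (m / 2) - 1 := by
  induction m with
  | zero => simp
  | succ m ih =>
    rw [Finset.range_add_one, Finset.filter_insert]
    by_cases h : m % 2 = 1
    · rw [if_pos h, Finset.sum_insert (by simp), ih]
      obtain ⟨t, ht⟩ : ∃ t, m = 2 * t + 1 := ⟨m / 2, by omega⟩
      subst ht
      have h2 : (2 * t + 1) / 2 = t := by omega
      have h3 : (2 * t + 1 + 1) / 2 = t + 1 := by omega
      have hB : B' (2 * t + 1) = 3 * 4 ^ t := by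
        simp only [B']
        rw [if_neg (by omega), if_neg (by omega)]
        have : 2 * t + 1 - 1 = 2 * t := by omega
        rw [this, pow_mul]; norm_num
      rw [h2, h3, hB]
      have : (1:ℕ) ≤ 4 ^ t := Nat.one_le_pow _ _ (by norm_num)
      have : (4:ℕ) ^ (t+1) = 4 * 4 ^ t := by ring
      omega
    · rw [if_neg h, ih]
      have : (m+1)/2 = m/2 := by omega
      rw [this]

lemma abrB_closed : ∀ i, abrB i = B' i := by
  intro i
  induction i using Nat.strong_induction_on with
  | _ i ih =>
    match i with
    | 0 => rw [abrB]; rfl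
    | 1 => rw [abrB]; rfl
    | n + 2 =>
      rw [abrB]
      rw [Finset.sum_attach ((Finset.range (n + 2)).filter fun j => j % 2 = 1) (fun j => abrB j)]
      have hcong : ∑ j ∈ (Finset.range (n+2)).filter (fun j => j % 2 = 1), abrB j
          = ∑ j ∈ (Finset.range (n+2)).filter (fun j => j % 2 = 1), B' j := by
        refine Finset.sum_congr rfl fun j hj => ih j ?_
        exact Finset.mem_range.mp (Finset.mem_filter.mp hj).1
      rw [hcong, sumOdd]
      have h1 : (1:ℕ) ≤ 4 ^ ((n+2)/2) := Nat.one_le_pow _ _ (by norm_num)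
      rcases Nat.even_or_odd n with ⟨t, ht⟩ | ⟨t, ht⟩
      · subst ht
        have h2 : (t + t + 2) / 2 = t + 1 := by omega
        rw [h2]
        simp only [B']
        rw [if_neg (by omega), if_pos (by omega)]
        have e1 : (2:ℕ) ^ (t + t + 3) = 8 * 4 ^ t := by
          rw [show t + t + 3 = 2*t + 3 from by ring, pow_add, pow_mul]; norm_num; ring
        have e2 : (2:ℕ) ^ (t + t + 2) = 4 * 4 ^ t := by
          rw [show t + t + 2 = 2*t + 2 from by ring, pow_add, pow_mul]; norm_num; ring
        have e3 : (4:ℕ) ^ (t+1) = 4 * 4^t := by ring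
        omega
      · subst ht
        have h2 : (2*t + 1 + 2) / 2 = t + 1 := by omega
        rw [h2]
        simp only [B']
        rw [if_neg (by omega), if_neg (by omega)]
        have e1 : (2:ℕ) ^ (2*t + 1 + 3) = 16 * 4 ^ t := by
          rw [show 2*t + 1 + 3 = 2*t + 4 from by ring, pow_add, pow_mul]; norm_num; ring
        have e2 : 3 * (2:ℕ) ^ (2*t + 1 + 2 - 1) = 12 * 4 ^ t := by
          rw [show 2*t + 1 + 2 - 1 = 2*t + 2 from by omega, pow_add, pow_mul]; norm_num; ring
        have e3 : (4:ℕ) ^ (t+1) = 4 * 4^t := by ring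
        omega

lemma abrB_zero : (abrB 0 : ℤ) = 2 := by rw [abrB]; norm_num
lemma abrB_even (k : ℕ) (hk : k ≠ 0) : (abrB (2*k) : ℤ) = 4 ^ k := by
  rw [abrB_closed]
  simp only [B']
  rw [if_neg (by omega), if_pos (by omega)]
  rw [pow_mul]; norm_num
lemma abrB_odd (k : ℕ) : (abrB (2*k+1) : ℤ) = 3 * 4 ^ k := by
  rw [abrB_closed]
  simp only [B']
  rw [if_neg (by omega), if_neg (by omega)]
  rw [show 2*k+1-1 = 2*k from by omega, pow_mul]; norm_num

lemma sum_pair (f : ℕ → ℤ) (m : ℕ) :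
    ∑ i ∈ Finset.range (2*m), f i = ∑ k ∈ Finset.range m, (f (2*k) + f (2*k+1)) := by
  induction m with
  | zero => simp
  | succ m ih =>
    rw [show 2*(m+1) = (2*m)+1+1 from by ring, Finset.sum_range_succ, Finset.sum_range_succ,
      ih, Finset.sum_range_succ]
    ring

lemma geom (m : ℕ) : ∑ k ∈ Finset.range m, (3 * 4 ^ k : ℤ) = 4 ^ m - 1 := by
  induction m with
  | zero => simp
  | succ m ih => rw [Finset.sum_range_succ, ih]; ring

lemma pair_bounds (n : ℕ) (d : ℕ → Bool) (k : ℕ) (hk : 2*k+2 ≤ n) :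
    0 ≤ (-1) ^ abrEps n d (2*k) * (cond (d (2*k)) 1 0 : ℤ) * (abrB (2*k) : ℤ)
        + (-1) ^ abrEps n d (2*k+1) * (cond (d (2*k+1)) 1 0 : ℤ) * (abrB (2*k+1) : ℤ)
      ∧ (-1) ^ abrEps n d (2*k) * (cond (d (2*k)) 1 0 : ℤ) * (abrB (2*k) : ℤ)
        + (-1) ^ abrEps n d (2*k+1) * (cond (d (2*k+1)) 1 0 : ℤ) * (abrB (2*k+1) : ℤ)
        ≤ 3 * 4 ^ k := by
  have hodd : abrEps n d (2*k+1) = 0 := by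
    rw [abrEps, if_neg]; rintro ⟨h, -⟩; omega
  have h4 : (0:ℤ) < 4 ^ k := by positivity
  have heven : abrEps n d (2*k) = if d (2*k) = true ∧ d (2*k+1) = true then 1 else 0 := by
    rw [abrEps]
    have h0 : (2*k) % 2 = 0 := by omega
    simp [h0, hk]
  rw [hodd, abrB_odd, heven]
  rcases Nat.eq_zero_or_pos k with hk0 | hk0
  · subst hk0
    cases h1 : d (2*0) <;> cases h2 : d (2*0+1) <;>
      simp [h1, h2, abrB_zero] <;> norm_num [abrB_zero]
  · have hB : (abrB (2*k) : ℤ) = 4 ^ k := abrB_even k (by omega)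
    cases h1 : d (2*k) <;> cases h2 : d (2*k+1) <;>
      simp [h1, h2, hB] <;> nlinarith

lemma abr_val_range_gen (n : ℕ) (hn : 2 ≤ n) (d : ℕ → Bool) :
    0 ≤ abrVal n d ∧ abrVal n d ≤ 2 ^ n - 1 := by
  rcases Nat.even_or_odd n with ⟨m, hm⟩ | ⟨m, hm⟩
  · have hm' : n = 2 * m := by omega
    subst hm'
    set f : ℕ → ℤ := fun i =>
      (-1) ^ abrEps (2*m) d i * (cond (d i) 1 0 : ℤ) * (abrB i : ℤ) with hf
    have hpair : ∀ k ∈ Finset.range m,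
        0 ≤ f (2*k) + f (2*k+1) ∧ f (2*k) + f (2*k+1) ≤ 3 * 4 ^ k :=
      fun k hk => pair_bounds (2*m) d k (by have := Finset.mem_range.mp hk; omega)
    have hval : abrVal (2*m) d = ∑ k ∈ Finset.range m, (f (2*k) + f (2*k+1)) := by
      rw [abrVal, sum_pair]
    constructor
    · rw [hval]
      exact Finset.sum_nonneg fun k hk => (hpair k hk).1
    · rw [hval]
      calc ∑ k ∈ Finset.range m, (f (2*k) + f (2*k+1))
          ≤ ∑ k ∈ Finset.range m, (3 * 4 ^ k : ℤ) :=
            Finset.sum_le_sum fun k hk => (hpair k hk).2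
        _ = 4 ^ m - 1 := geom m
        _ = 2 ^ (2*m) - 1 := by rw [pow_mul]; norm_num
  · have hm' : n = 2 * m + 1 := by omega
    subst hm'
    have hm1 : 1 ≤ m := by omega
    set f : ℕ → ℤ := fun i =>
      (-1) ^ abrEps (2*m+1) d i * (cond (d i) 1 0 : ℤ) * (abrB i : ℤ) with hf
    have hpair : ∀ k ∈ Finset.range m,
        0 ≤ f (2*k) + f (2*k+1) ∧ f (2*k) + f (2*k+1) ≤ 3 * 4 ^ k :=
      fun k hk => pair_bounds (2*m+1) d k (by have := Finset.mem_range.mp hk; omega)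
    have htopEps : abrEps (2*m+1) d (2*m) = 0 := by
      rw [abrEps, if_neg]; rintro ⟨-, h, -⟩; omega
    have htopB : (abrB (2*m) : ℤ) = 4 ^ m := abrB_even m (by omega)
    have htop : 0 ≤ f (2*m) ∧ f (2*m) ≤ 4 ^ m := by
      have h4 : (0:ℤ) < 4 ^ m := by positivity
      simp only [hf, htopEps, htopB, pow_zero, one_mul]
      cases h1 : d (2*m) <;> simp [h1] <;> linarith
    have hval : abrVal (2*m+1) d
        = (∑ k ∈ Finset.range m, (f (2*k) + f (2*k+1))) + f (2*m) := by
      rw [abrVal, Finset.sum_range_succ, sum_pair]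
    constructor
    · rw [hval]
      have := Finset.sum_nonneg fun k hk => (hpair k hk).1
      linarith [htop.1]
    · rw [hval]
      have hs : ∑ k ∈ Finset.range m, (f (2*k) + f (2*k+1)) ≤ 4 ^ m - 1 := by
        calc ∑ k ∈ Finset.range m, (f (2*k) + f (2*k+1))
            ≤ ∑ k ∈ Finset.range m, (3 * 4 ^ k : ℤ) :=
              Finset.sum_le_sum fun k hk => (hpair k hk).2
          _ = 4 ^ m - 1 := geom m
      have h2 : (2:ℤ) ^ (2*m+1) = 2 * 4 ^ m := by
        rw [pow_succ, pow_mul]; norm_num; ring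
      linarith [htop.2]

theorem abr_val_range (n : ℕ) (hn : 2 ≤ n) (d : Fin n → Bool) :
    0 ≤ abrVal n (extBits n d) ∧ abrVal n (extBits n d) ≤ 2 ^ n - 1 :=
  abr_val_range_gen n hn (extBits n d)
end

section
/- For every n ≥ 2, the set of integers representable by n-bit ABR strings equals {0, 1, …, 2^n - 1}; equivalently the ABR evaluation map is a bijection from {0,1}^n onto {0, …, 2^n - 1}. -/
def abrC (n : ℕ) : ℕ := if n = 0 then 2 else if n % 2 = 0 then 2^n else 3 * 2^(n-1)

lemma abrC_sum (m : ℕ) :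
    ∑ j ∈ ((Finset.range m).filter fun j => j % 2 = 1), abrC j = 4 ^ (m / 2) - 1 := by
  induction m with
  | zero => simp
  | succ m ih =>
    rw [Finset.range_add_one, Finset.filter_insert]
    by_cases h : m % 2 = 1
    · rw [if_pos h, Finset.sum_insert (by simp), ih]
      have hm1 : m ≠ 0 := by omega
      have : abrC m = 3 * 2 ^ (m-1) := by
        unfold abrC; rw [if_neg hm1, if_neg (by omega)]
      rw [this]
      have h2 : 2 ^ (m-1) = 4 ^ ((m-1)/2) := by
        rw [show (4:ℕ) = 2^2 by norm_num, ← pow_mul]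
        congr 1; omega
      have h3 : (4:ℕ) ^ ((m+1)/2) = 4 * 4 ^ (m/2) := by
        rw [show (m+1)/2 = m/2 + 1 from by omega, pow_succ]; ring
      have h4 : (m-1)/2 = m/2 := by omega
      have h5 : (1:ℕ) ≤ 4 ^ (m/2) := Nat.one_le_pow _ _ (by norm_num)
      rw [h2, h4, h3]
      omega
    · rw [if_neg h, ih, show (m+1)/2 = m/2 from by omega]

lemma abrB_eq (n : ℕ) : abrB n = abrC n := by
  induction n using Nat.strong_induction_on with
  | _ n ih =>
    match n with
    | 0 => rw [abrB]; simp [abrC]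
    | 1 => rw [abrB]; simp [abrC]
    | n + 2 =>
      rw [abrB]
      rw [Finset.sum_attach (((Finset.range (n + 2)).filter fun j => j % 2 = 1)) (fun j => abrB j)]
      rw [Finset.sum_congr rfl (fun j hj => ih j (Finset.mem_range.mp (Finset.mem_filter.mp hj).1))]
      rw [abrC_sum]
      have h4 : 4 ^ ((n+2)/2) = 2 ^ (2 * ((n+2)/2)) := by
        rw [show (4:ℕ) = 2^2 by norm_num, ← pow_mul]
      unfold abrC
      rw [if_neg (by omega)]
      by_cases h : (n+2) % 2 = 0
      · rw [if_pos h]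
        have : 2 * ((n+2)/2) = n + 2 := by omega
        rw [this] at h4
        have h5 : (2:ℕ)^(n+2) ≤ 2^(n+3) := Nat.pow_le_pow_right (by norm_num) (by omega)
        have h6 : (1:ℕ) ≤ 2^(n+2) := Nat.one_le_pow _ _ (by norm_num)
        rw [h4]
        have : (2:ℕ)^(n+3) = 2 * 2^(n+2) := by ring
        omega
      · rw [if_neg h]
        have : 2 * ((n+2)/2) = n + 1 := by omega
        rw [this] at h4
        have h6 : (1:ℕ) ≤ 2^(n+1) := Nat.one_le_pow _ _ (by norm_num)
        rw [h4]
        have : (2:ℕ)^(n+3) = 4 * 2^(n+1) := by rw [pow_succ, pow_succ]; ring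
        have h7 : n + 2 - 1 = n + 1 := by omega
        rw [h7]
        omega


lemma abrB_even_s9 {n : ℕ} (h2 : 2 ≤ n) (he : n % 2 = 0) : abrB n = 2^n := by
  rw [abrB_eq]; unfold abrC; rw [if_neg (by omega), if_pos he]

lemma abrB_odd_s9 {n : ℕ} (h2 : 3 ≤ n) (ho : n % 2 = 1) : abrB n = 3 * 2^(n-1) := by
  rw [abrB_eq]; unfold abrC; rw [if_neg (by omega), if_neg (by omega)]

lemma abrVal_congr {n : ℕ} {e e' : ℕ → Bool} (h : ∀ i < n, e i = e' i) :
    abrVal n e = abrVal n e' := by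
  unfold abrVal
  apply Finset.sum_congr rfl
  intro i hi
  have hi' := Finset.mem_range.mp hi
  have heps : abrEps n e i = abrEps n e' i := by
    unfold abrEps
    by_cases hc : i + 2 ≤ n
    · rw [h i hi', h (i+1) (by omega)]
    · rw [if_neg (by tauto), if_neg (by tauto)]
  rw [heps, h i hi']

lemma abrVal_succ_even {n : ℕ} (h2 : 2 ≤ n) (he : n % 2 = 0) (e : ℕ → Bool) :
    abrVal (n+1) e = abrVal n e + (cond (e n) 1 0) * 2^n := by
  unfold abrVal
  rw [Finset.sum_range_succ]
  congr 1
  · apply Finset.sum_congr rfl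
    intro i hi
    have hi' := Finset.mem_range.mp hi
    have heps : abrEps (n+1) e i = abrEps n e i := by
      unfold abrEps
      refine if_congr ?_ rfl rfl
      constructor <;> rintro ⟨a, b, c⟩ <;> exact ⟨a, by omega, c⟩
    rw [heps]
  · have heps : abrEps (n+1) e n = 0 := by
      unfold abrEps; rw [if_neg (by omega)]
    rw [heps, abrB_even_s9 h2 he]
    push_cast
    ring

def pairC (a b : Bool) : ℤ := cond a (cond b 2 1) (cond b 3 0)

lemma abrVal_two_step {m : ℕ} (h2 : 2 ≤ m) (he : m % 2 = 0) (e : ℕ → Bool) :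
    abrVal (m+2) e = abrVal m e + pairC (e m) (e (m+1)) * 2^m := by
  unfold abrVal
  rw [Finset.sum_range_succ, Finset.sum_range_succ]
  have hsum : ∑ i ∈ Finset.range m, (-1) ^ abrEps (m+2) e i * (cond (e i) 1 0 : ℤ) * (abrB i : ℤ)
      = ∑ i ∈ Finset.range m, (-1) ^ abrEps m e i * (cond (e i) 1 0 : ℤ) * (abrB i : ℤ) := by
    apply Finset.sum_congr rfl
    intro i hi
    have hi' := Finset.mem_range.mp hi
    have heps : abrEps (m+2) e i = abrEps m e i := by
      unfold abrEps
      refine if_congr ?_ rfl rfl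
      constructor <;> rintro ⟨a, b, c⟩ <;> exact ⟨a, by omega, c⟩
    rw [heps]
  rw [hsum]
  have hepsm : abrEps (m+2) e m = if e m = true ∧ e (m+1) = true then 1 else 0 := by
    unfold abrEps
    refine if_congr ?_ rfl rfl
    constructor
    · rintro ⟨a, b, c⟩; exact c
    · intro hc; exact ⟨he, by omega, hc⟩
  have hepsm1 : abrEps (m+2) e (m+1) = 0 := by
    unfold abrEps; rw [if_neg (by omega)]
  rw [hepsm, hepsm1, abrB_even_s9 h2 he, abrB_odd_s9 (by omega) (by omega)]
  have : m + 1 - 1 = m := by omega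
  rw [this]
  cases hm : e m <;> cases hm1 : e (m+1) <;> simp [pairC] <;> push_cast <;> ring

def GoodVal (n : ℕ) : Prop :=
  (∀ e : ℕ → Bool, 0 ≤ abrVal n e ∧ abrVal n e ≤ 2^n - 1) ∧
  (∀ v : ℤ, 0 ≤ v → v ≤ 2^n - 1 → ∃ e : ℕ → Bool, abrVal n e = v) ∧
  (∀ e e' : ℕ → Bool, abrVal n e = abrVal n e' → ∀ i < n, e i = e' i)

lemma abrVal_two (e : ℕ → Bool) :
    abrVal 2 e = cond (e 0) (cond (e 1) 1 2) (cond (e 1) 3 0) := by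
  unfold abrVal
  rw [Finset.sum_range_succ, Finset.sum_range_succ, Finset.sum_range_zero]
  have h0 : abrEps 2 e 0 = if e 0 = true ∧ e 1 = true then 1 else 0 := by
    unfold abrEps
    refine if_congr ?_ rfl rfl
    constructor
    · rintro ⟨a, b, c⟩; exact c
    · intro hc; exact ⟨rfl, by omega, hc⟩
  have h1 : abrEps 2 e 1 = 0 := by unfold abrEps; rw [if_neg (by omega)]
  rw [h0, h1, show abrB 0 = 2 from by rw [abrB], show abrB 1 = 3 from by rw [abrB]]
  cases hm : e 0 <;> cases hm1 : e 1 <;> norm_num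

lemma goodVal_two : GoodVal 2 := by
  refine ⟨?_, ?_, ?_⟩
  · intro e
    rw [abrVal_two]
    cases e 0 <;> cases e 1 <;> norm_num
  · intro v h0 h1
    norm_num at h1
    interval_cases v
    · exact ⟨fun _ => false, by rw [abrVal_two]; rfl⟩
    · exact ⟨fun _ => true, by rw [abrVal_two]; rfl⟩
    · exact ⟨fun i => decide (i = 0), by rw [abrVal_two]; norm_num⟩
    · exact ⟨fun i => decide (i = 1), by rw [abrVal_two]; norm_num⟩
  · intro e e' h i hi
    rw [abrVal_two, abrVal_two] at h
    interval_cases i <;>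
      cases h0 : e 0 <;> cases h1 : e 1 <;> cases h0' : e' 0 <;> cases h1' : e' 1 <;>
      simp [h0, h1, h0', h1'] at h ⊢ <;> omega

lemma goodVal_succ {n : ℕ} (h2 : 2 ≤ n) (he : n % 2 = 0) (H : GoodVal n) : GoodVal (n+1) := by
  obtain ⟨Hb, Hs, Hi⟩ := H
  have hpos : (0:ℤ) < 2^n := by positivity
  have hp : (2:ℤ)^(n+1) = 2 * 2^n := by ring
  refine ⟨?_, ?_, ?_⟩
  · intro e
    rw [abrVal_succ_even h2 he, hp]
    have hb := Hb e
    cases e n <;> simp <;> omega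
  · intro v hv0 hv1
    rw [hp] at hv1
    by_cases hc : v ≤ 2^n - 1
    · obtain ⟨e, hev⟩ := Hs v hv0 hc
      refine ⟨fun i => if i = n then false else e i, ?_⟩
      rw [abrVal_succ_even h2 he]
      have hcg : abrVal n (fun i => if i = n then false else e i) = abrVal n e :=
        abrVal_congr (fun i hi => if_neg (by omega))
      rw [hcg, hev]
      simp
    · obtain ⟨e, hev⟩ := Hs (v - 2^n) (by omega) (by omega)
      refine ⟨fun i => if i = n then true else e i, ?_⟩
      rw [abrVal_succ_even h2 he]
      have hcg : abrVal n (fun i => if i = n then true else e i) = abrVal n e :=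
        abrVal_congr (fun i hi => if_neg (by omega))
      rw [hcg, hev]
      simp
  · intro e e' h i hi
    rw [abrVal_succ_even h2 he, abrVal_succ_even h2 he] at h
    have hb := Hb e
    have hb' := Hb e'
    have key : e n = e' n ∧ abrVal n e = abrVal n e' := by
      cases hn : e n <;> cases hn' : e' n <;> rw [hn, hn'] at h <;> simp at h ⊢ <;> omega
    by_cases hin : i < n
    · exact Hi e e' key.2 i hin
    · have : i = n := by omega
      rw [this]; exact key.1

lemma goodVal_two_step {m : ℕ} (h2 : 2 ≤ m) (he : m % 2 = 0) (H : GoodVal m) :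
    GoodVal (m+2) := by
  obtain ⟨Hb, Hs, Hi⟩ := H
  have hpos : (0:ℤ) < 2^m := by positivity
  have hp : (2:ℤ)^(m+2) = 4 * 2^m := by ring
  refine ⟨?_, ?_, ?_⟩
  · intro e
    rw [abrVal_two_step h2 he, hp]
    have hb := Hb e
    cases e m <;> cases e (m+1) <;> simp [pairC] <;> omega
  · intro v hv0 hv1
    rw [hp] at hv1
    have main : ∀ a b : Bool, ∀ w : ℤ, 0 ≤ w → w ≤ 2^m - 1 → v = w + pairC a b * 2^m →
        ∃ e : ℕ → Bool, abrVal (m+2) e = v := by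
      intro a b w hw0 hw1 hv
      obtain ⟨e, hev⟩ := Hs w hw0 hw1
      refine ⟨fun i => if i = m then a else if i = m+1 then b else e i, ?_⟩
      rw [abrVal_two_step h2 he]
      have hcg : abrVal m (fun i => if i = m then a else if i = m+1 then b else e i)
          = abrVal m e :=
        abrVal_congr (fun i hi => (if_neg (by omega)).trans (if_neg (by omega)))
      rw [hcg, hev, if_pos rfl, if_neg (show ¬ m + 1 = m by omega), if_pos rfl]
      omega
    by_cases h0 : v ≤ 2^m - 1
    · exact main false false v hv0 h0 (by simp [pairC])
    · by_cases h1 : v ≤ 2 * 2^m - 1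
      · exact main true false (v - 2^m) (by omega) (by omega) (by simp [pairC]; try ring)
      · by_cases h3 : v ≤ 3 * 2^m - 1
        · exact main true true (v - 2 * 2^m) (by omega) (by omega) (by simp [pairC]; try ring)
        · exact main false true (v - 3 * 2^m) (by omega) (by omega) (by simp [pairC]; try ring)
  · intro e e' h i hi
    rw [abrVal_two_step h2 he, abrVal_two_step h2 he] at h
    have hb := Hb e
    have hb' := Hb e'
    have key : e m = e' m ∧ e (m+1) = e' (m+1) ∧ abrVal m e = abrVal m e' := by
      cases hm : e m <;> cases hm1 : e (m+1) <;> cases hm' : e' m <;> cases hm1' : e' (m+1) <;>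
        rw [hm, hm1, hm', hm1'] at h <;> simp [pairC] at h ⊢ <;> omega
    by_cases him : i < m
    · exact Hi e e' key.2.2 i him
    · by_cases him' : i = m
      · rw [him']; exact key.1
      · have : i = m + 1 := by omega
        rw [this]; exact key.2.1

lemma goodVal : ∀ n : ℕ, 2 ≤ n → GoodVal n := by
  intro n
  induction n using Nat.strong_induction_on with
  | _ n ih =>
    intro hn
    match n, hn with
    | 2, _ => exact goodVal_two
    | 3, _ => exact goodVal_succ (le_refl 2) rfl goodVal_two
    | (m+4), _ =>
      rcases Nat.mod_two_eq_zero_or_one m with hpar | hpar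
      · exact goodVal_two_step (by omega) (by omega) (ih (m+2) (by omega) (by omega))
      · exact goodVal_succ (by omega) (by omega) (ih (m+3) (by omega) (by omega))

theorem abr_val_bijection (n : ℕ) (hn : 2 ≤ n) :
    (Set.range fun d : Fin n → Bool => abrVal n (extBits n d)) =
      Set.Icc (0 : ℤ) (2 ^ n - 1) ∧
    Function.Injective (fun d : Fin n → Bool => abrVal n (extBits n d)) := by
  obtain ⟨Hb, Hs, Hi⟩ := goodVal n hn
  constructor
  · ext v
    simp only [Set.mem_range, Set.mem_Icc]
    constructor
    · rintro ⟨d, rfl⟩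
      exact Hb _
    · rintro ⟨h0, h1⟩
      obtain ⟨e, hev⟩ := Hs v h0 h1
      refine ⟨fun i => e i.1, ?_⟩
      rw [show abrVal n (extBits n fun i => e i.1) = abrVal n e from
        abrVal_congr (fun i hi => by unfold extBits; rw [dif_pos hi])]
      exact hev
  · intro d d' h
    funext i
    have h2 := Hi _ _ h i.1 i.2
    unfold extBits at h2
    rw [dif_pos i.2, dif_pos i.2] at h2
    simpa using h2
end

section
/- For even n = 2k with k ≥ 1, the ABR value of the all-ones string of length n equals (2 · 4^k - 5)/3. -/
lemma abrB_closed_s13 : ∀ n, 1 ≤ n → abrB n = (1 + 2 * (n % 2)) * 4 ^ (n / 2) := by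
  intro n
  induction n using Nat.strong_induction_on with
  | _ n ih =>
    match n with
    | 0 => intro h; omega
    | 1 => intro _; simp [abrB]
    | (n + 2) =>
      intro _
      rw [abrB, Finset.sum_attach]
      have hsum : ∀ m, m ≤ n + 2 →
          ∑ j ∈ (Finset.range m).filter (fun j => j % 2 = 1), abrB j = 4 ^ (m / 2) - 1 := by
        intro m
        induction m with
        | zero => simp
        | succ m ihm =>
          intro hm
          rw [Finset.range_add_one, Finset.filter_insert]
          by_cases h : m % 2 = 1
          · rw [if_pos h, Finset.sum_insert (by simp), ihm (by omega), ih m (by omega) (by omega)]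
            have h1 : (m + 1) / 2 = m / 2 + 1 := by omega
            have h4 : 1 ≤ (4:ℕ) ^ (m / 2) := Nat.one_le_pow _ _ (by norm_num)
            rw [h1, h, pow_succ]
            ring_nf
            omega
          · rw [if_neg h, ihm (by omega)]
            congr 2
            omega
      rw [hsum (n + 2) le_rfl]
      rcases Nat.even_or_odd n with ⟨m, hm⟩ | ⟨m, hm⟩
      · subst hm
        have e1 : (m + m + 2) / 2 = m + 1 := by omega
        have e2 : (m + m + 2) % 2 = 0 := by omega
        have e3 : (2:ℕ) ^ (m + m + 3) = 4 ^ m * 8 := by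
          rw [show m + m + 3 = 2 * m + 3 by ring, pow_add, pow_mul]; norm_num
        have e4 : (4:ℕ) ^ (m + 1) = 4 * 4 ^ m := by rw [pow_succ]; ring
        have h4 : 1 ≤ (4:ℕ) ^ m := Nat.one_le_pow _ _ (by norm_num)
        rw [e1, e2, e3, e4]
        omega
      · subst hm
        have e1 : (2 * m + 1 + 2) / 2 = m + 1 := by omega
        have e2 : (2 * m + 1 + 2) % 2 = 1 := by omega
        have e3 : (2:ℕ) ^ (2 * m + 1 + 3) = 4 ^ m * 16 := by
          rw [show 2 * m + 1 + 3 = 2 * m + 4 by ring, pow_add, pow_mul]; norm_num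
        have e4 : (4:ℕ) ^ (m + 1) = 4 * 4 ^ m := by rw [pow_succ]; ring
        have h4 : 1 ≤ (4:ℕ) ^ m := Nat.one_le_pow _ _ (by norm_num)
        rw [e1, e2, e3, e4]
        omega

lemma abrVal_ones (k : ℕ) :
    abrVal (2 * k) (fun _ => true) =
      ∑ i ∈ Finset.range (2 * k), (if i % 2 = 0 then -(abrB i : ℤ) else (abrB i : ℤ)) := by
  unfold abrVal
  refine Finset.sum_congr rfl fun i hi => ?_
  rw [Finset.mem_range] at hi
  unfold abrEps
  by_cases h : i % 2 = 0
  · rw [if_pos ⟨h, by omega, rfl, rfl⟩, if_pos h]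
    simp
  · rw [if_neg (by tauto), if_neg h]
    simp

lemma aux_sum (k : ℕ) (hk : 1 ≤ k) :
    3 * ∑ i ∈ Finset.range (2 * k), (if i % 2 = 0 then -(abrB i : ℤ) else (abrB i : ℤ))
      = 2 * 4 ^ k - 5 := by
  induction k, hk using Nat.le_induction with
  | base =>
    rw [show 2 * 1 = 2 by rfl, Finset.sum_range_succ, Finset.sum_range_succ, Finset.sum_range_zero]
    norm_num [abrB]
  | succ k hk ih =>
    rw [show 2 * (k + 1) = (2 * k + 1) + 1 by ring, Finset.sum_range_succ, Finset.sum_range_succ,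
        abrB_closed_s13 (2 * k) (by omega), abrB_closed_s13 (2 * k + 1) (by omega),
        show (2 * k) % 2 = 0 by omega, show (2 * k + 1) % 2 = 1 by omega,
        show (2 * k) / 2 = k by omega, show (2 * k + 1) / 2 = k by omega]
    norm_num
    rw [show (4:ℤ) ^ (k + 1) = 4 * 4 ^ k by rw [pow_succ]; ring]
    linarith [ih]

theorem abr_all_ones_even (k : ℕ) (hk : 1 ≤ k) :
    abrVal (2 * k) (fun _ => true) = (2 * 4 ^ k - 5) / 3 := by
  rw [abrVal_ones, ← aux_sum k hk, Int.mul_ediv_cancel_left _ (by norm_num)]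
end

section
/- For every even index i ≥ 2 (with n > i+1), the ABR base B_i equals the binary base 2^i, i.e., the ABR and binary place values agree at all even indices i ≥ 2. -/
lemma abrB_add_two_s16 (n : ℕ) : abrB (n+2) =
    2 ^ (n + 3) - 1 - ∑ j ∈ ((Finset.range (n + 2)).filter fun j => j % 2 = 1), abrB j := by
  rw [abrB]
  congr 1
  exact Finset.sum_attach _ _

lemma odd_sum : ∀ k : ℕ, ∑ j ∈ ((Finset.range (2*k)).filter fun j => j % 2 = 1), abrB j = 4^k - 1 := by
  intro k
  induction k with
  | zero => simp
  | succ k ih =>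
    have h1 : 2*(k+1) = (2*k+1)+1 := by ring
    have hfilt : ((Finset.range (2*k+1)).filter fun j => j % 2 = 1) =
        ((Finset.range (2*k)).filter fun j => j % 2 = 1) := by
      rw [Finset.range_add_one, Finset.filter_insert]
      simp [Nat.mul_mod_right]
    have hodd : abrB (2*k+1) = 3 * 4^k := by
      match k with
      | 0 => simp [abrB]
      | k+1 =>
        have h2 : 2*(k+1)+1 = (2*k+1)+2 := by ring
        rw [h2, abrB_add_two_s16]
        have : (2*k+1)+2 = 2*(k+1)+1 := by ring
        rw [this, hfilt, ih]
        have h4 : (2:ℕ)^(2*k+1+3) = 16 * 4^k := by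
          rw [show 2*k+1+3 = 2*k+4 by ring, pow_add, pow_mul]; norm_num; ring
        rw [h4]
        have : 1 ≤ (4:ℕ)^k := Nat.one_le_pow _ _ (by norm_num)
        omega
    rw [h1, Finset.range_add_one, Finset.filter_insert]
    rw [if_pos (by omega)]
    rw [Finset.sum_insert (by simp), hfilt, ih, hodd]
    have : 1 ≤ (4:ℕ)^k := Nat.one_le_pow _ _ (by norm_num)
    rw [pow_succ]
    omega

theorem abr_even_base_eq_binary (n i : ℕ) (h2 : 2 ≤ i) (he : i % 2 = 0)
    (hn : i + 1 < n) : abrB i = 2 ^ i := by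
  obtain ⟨k, rfl⟩ : ∃ k, i = 2*k := ⟨i/2, by omega⟩
  obtain ⟨m, rfl⟩ : ∃ m, k = m+1 := ⟨k-1, by omega⟩
  have h1 : 2*(m+1) = 2*m + 2 := by ring
  rw [h1, abrB_add_two_s16]
  have h2 : 2*m+2 = 2*(m+1) := by ring
  rw [h2, odd_sum]
  have h4 : (2:ℕ)^(2*m+3) = 2 * (4^(m+1)) := by
    rw [show 2*m+3 = 2*(m+1)+1 by ring, pow_succ, pow_mul]; norm_num; ring
  have h5 : (2:ℕ)^(2*(m+1)) = 4^(m+1) := by rw [pow_mul]; norm_num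
  have : 1 ≤ (4:ℕ)^(m+1) := Nat.one_le_pow _ _ (by norm_num)
  omega
end
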